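/- (Arbitrarily slow convergence of FDRS.) Let a ≥ 0. For every function F : ℝ₊ → (0,1) that is strictly decreasing to zero and satisfies {1/(j+1) : j ∈ ℕ, j ≥ 1} ⊆ range(F), there exist a sequence of angles (θ_i)_{i≥0} ⊆ (0, π/2] and a point z⁰ ∈ H such that, with T the associated block operator: (i) U ∩ V = {0}; (ii) 0 is the unique fixed point of T; (iii) the iterates z^{k+1} := T(z^k) converge strongly (in norm) to 0; and (iv) ‖z^k‖ ≥ e^{−1}F(k) for all k ≥ 1. -/

import Mathlib

open Filter

/-- The Hilbert space ℓ²(ℕ; ℝ²). -/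
abbrev SlowH : Type := lp (fun _ : ℕ => EuclideanSpace ℝ (Fin 2)) 2

section Aux

abbrev AuxE2 : Type := EuclideanSpace ℝ (Fin 2)

noncomputable def auxBMap (g b : ℝ) : AuxE2 →ₗ[ℝ] AuxE2 where
  toFun v := WithLp.toLp 2 (fun t : Fin 2 => if t = 0 then -g * v 1 else b * v 1)
  map_add' v w := by
    ext t
    by_cases h : t = 0 <;> simp [h, PiLp.add_apply] <;> ring
  map_smul' r v := by
    ext t
    by_cases h : t = 0 <;> simp [h, PiLp.smul_apply, smul_eq_mul] <;> ring

lemma aux_coord_le_norm (v : AuxE2) (t : Fin 2) : |v t| ≤ ‖v‖ := by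
  rw [EuclideanSpace.norm_eq, Fin.sum_univ_two]
  have h0 : |v t| = Real.sqrt ((v t)^2) := (Real.sqrt_sq_eq_abs _).symm
  rw [h0]
  apply Real.sqrt_le_sqrt
  fin_cases t <;> simp [Real.norm_eq_abs, sq_abs] <;> nlinarith [sq_nonneg (v 0), sq_nonneg (v 1)]

lemma auxE2_eq_zero (v : AuxE2) (h0 : v 0 = 0) (h1 : v 1 = 0) : v = 0 := by
  ext t
  fin_cases t
  · exact h0
  · exact h1

lemma auxBMap_norm_le {g b : ℝ} (h : g^2 + b^2 ≤ 1) (v : AuxE2) : ‖auxBMap g b v‖ ≤ |v 1| := by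
  rw [EuclideanSpace.norm_eq, Fin.sum_univ_two]
  have h1 : (auxBMap g b v) 0 = -g * v 1 := rfl
  have h2 : (auxBMap g b v) 1 = b * v 1 := rfl
  rw [h1, h2, ← Real.sqrt_sq_eq_abs (v 1)]
  apply Real.sqrt_le_sqrt
  simp [Real.norm_eq_abs, mul_pow, sq_abs]
  nlinarith [sq_nonneg (v 1)]

lemma aux_toReal_two : (2 : ENNReal).toReal = 2 := by norm_num

lemma aux_toReal_two_pos : (0:ℝ) < (2 : ENNReal).toReal := by norm_num

lemma aux_rpow_toReal_two (x : ℝ) : x ^ (2 : ENNReal).toReal = x ^ 2 := by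
  rw [aux_toReal_two, Real.rpow_two]

lemma aux_diag_mem (M : ℕ → AuxE2 →L[ℝ] AuxE2) (hM : ∀ i v, ‖M i v‖ ≤ ‖v‖) (z : SlowH) :
    Memℓp (fun i => M i (z i)) 2 := by
  apply memℓp_gen
  have hs := (lp.memℓp z).summable aux_toReal_two_pos
  apply Summable.of_nonneg_of_le (fun i => Real.rpow_nonneg (norm_nonneg _) _) _ hs
  intro i
  exact Real.rpow_le_rpow (norm_nonneg _) (hM i (z i)) (by norm_num)

noncomputable def auxDiagOp (M : ℕ → AuxE2 →L[ℝ] AuxE2) (hM : ∀ i v, ‖M i v‖ ≤ ‖v‖) :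
    SlowH →L[ℝ] SlowH :=
  LinearMap.mkContinuous
    { toFun := fun z => ⟨fun i => M i (z i), aux_diag_mem M hM z⟩
      map_add' := fun y z => by
        apply lp.ext
        funext i
        simp [lp.coeFn_add, Pi.add_apply]
        rfl
      map_smul' := fun r z => by
        apply lp.ext
        funext i
        simp [lp.coeFn_smul, Pi.smul_apply] }
    1
    (by
      intro z
      rw [one_mul]
      apply lp.norm_le_of_tsum_le aux_toReal_two_pos (norm_nonneg _)
      rw [lp.norm_rpow_eq_tsum aux_toReal_two_pos z]
      apply Summable.tsum_le_tsum _ ((aux_diag_mem M hM z).summable aux_toReal_two_pos)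
        ((lp.memℓp z).summable aux_toReal_two_pos)
      intro i
      exact Real.rpow_le_rpow (norm_nonneg _) (hM i (z i)) (by norm_num))

lemma auxDiagOp_apply (M : ℕ → AuxE2 →L[ℝ] AuxE2) (hM : ∀ i v, ‖M i v‖ ≤ ‖v‖) (z : SlowH)
    (i : ℕ) : (auxDiagOp M hM z) i = M i (z i) := rfl

end Aux

set_option maxHeartbeats 2000000 in
/-- arbitrarily slow convergence of FDRS. -/
theorem fdrs_arbitrarily_slow_convergence
    (a : ℝ) (ha : 0 ≤ a)
    (F : ℝ → ℝ)
    (hF01 : ∀ x : ℝ, 0 ≤ x → F x ∈ Set.Ioo (0 : ℝ) 1)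
    (hFanti : StrictAntiOn F (Set.Ici 0))
    (hFzero : Tendsto F atTop (nhds 0))
    (hFrange : ∀ j : ℕ, 1 ≤ j → ∃ x : ℝ, 0 ≤ x ∧ F x = 1 / (j + 1)) :
    ∃ θ : ℕ → ℝ, (∀ i, θ i ∈ Set.Ioc (0 : ℝ) (Real.pi / 2)) ∧
    ∃ T : SlowH →L[ℝ] SlowH,
      -- T is the associated block operator:
      (∀ z : SlowH, ∀ i : ℕ,
        (T z) i 0 = -(Real.sin (θ i) * Real.cos (θ i) / (a + 1)) * (z i 1) ∧
        (T z) i 1 = ((Real.cos (θ i) ^ 2 + a) / (a + 1)) * (z i 1)) ∧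
      -- (i) U ∩ V = {0}
      (∀ z : SlowH,
        (∀ i : ℕ, ∃ r : ℝ, z i 0 = r * Real.cos (θ i) ∧ z i 1 = r * Real.sin (θ i)) →
        (∀ i : ℕ, z i 1 = 0) → z = 0) ∧
      -- (ii) 0 is the unique fixed point of T
      (T 0 = 0 ∧ ∀ z : SlowH, T z = z → z = 0) ∧
      -- (iii), (iv): there is an initial point whose orbit converges strongly to 0,
      -- but no faster than e⁻¹ F(k)
      ∃ z0 : SlowH,
        Tendsto (fun k : ℕ => (⇑T)^[k] z0) atTop (nhds (0 : SlowH)) ∧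
        ∀ k : ℕ, 1 ≤ k → Real.exp (-1) * F k ≤ ‖(⇑T)^[k] z0‖ := by
  classical
  have ha1 : (0:ℝ) < a + 1 := by linarith
  -- the sequence of points where F equals 1/(j+1)
  have hxspec : ∀ j : ℕ, 1 ≤ j →
      0 ≤ (if h : 1 ≤ j then (hFrange j h).choose else 0) ∧
      F (if h : 1 ≤ j then (hFrange j h).choose else 0) = 1/(j+1) := by
    intro j hj
    simp only [dif_pos hj]
    exact (hFrange j hj).choose_spec
  set x : ℕ → ℝ := fun j => if h : 1 ≤ j then (hFrange j h).choose else 0 with hxdef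
  -- the integer thresholds
  set m : ℕ → ℕ := fun n => Nat.rec 0 (fun j prev => max ⌈x (j+1)⌉₊ (prev + 1)) n with hmdef
  have hm0 : m 0 = 0 := rfl
  have hm_succ : ∀ j, m (j+1) = max ⌈x (j+1)⌉₊ (m j + 1) := fun j => rfl
  have hm_lt : ∀ j, m j < m (j+1) := by
    intro j
    have : m j + 1 ≤ m (j+1) := by rw [hm_succ]; exact le_max_right _ _
    omega
  have hm_ge : ∀ j, j ≤ m j := by
    intro j
    induction j with
    | zero => omega
    | succ n ih => have := hm_lt n; omega
  have hm_pos : ∀ j, 0 < m (j+1) := by intro j; have := hm_lt j; omega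
  have hm_x : ∀ j, 1 ≤ j → x j ≤ (m j : ℝ) := by
    intro j hj
    obtain ⟨j', rfl⟩ : ∃ j', j = j' + 1 := ⟨j - 1, by omega⟩
    have h1 : (⌈x (j'+1)⌉₊ : ℕ) ≤ m (j'+1) := by rw [hm_succ]; exact le_max_left _ _
    calc x (j'+1) ≤ (⌈x (j'+1)⌉₊ : ℝ) := Nat.le_ceil _
    _ ≤ (m (j'+1) : ℝ) := by exact_mod_cast h1
  -- the decay rates
  set c : ℕ → ℝ := fun j => Real.exp (-(1 / (m (j+1) : ℝ))) with hcdef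
  have hc_pos : ∀ j, 0 < c j := fun j => Real.exp_pos _
  have hc_lt1 : ∀ j, c j < 1 := by
    intro j
    apply Real.exp_lt_one_iff.mpr
    have : (0:ℝ) < (m (j+1) : ℝ) := by exact_mod_cast hm_pos j
    have : (0:ℝ) < 1 / (m (j+1) : ℝ) := by positivity
    linarith
  -- the angles
  set θ : ℕ → ℝ := fun j => Real.arccos (Real.sqrt (c j)) with hθdef
  have hcos : ∀ j, Real.cos (θ j) = Real.sqrt (c j) := by
    intro j
    exact Real.cos_arccos (by linarith [Real.sqrt_nonneg (c j)])
      (Real.sqrt_le_one.mpr (hc_lt1 j).le)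
  have hcos_sq : ∀ j, Real.cos (θ j)^2 = c j := by
    intro j
    rw [hcos j]
    exact Real.sq_sqrt (hc_pos j).le
  have hsin_pos : ∀ j, 0 < Real.sin (θ j) := by
    intro j
    have : Real.sin (θ j) = Real.sqrt (1 - Real.sqrt (c j) ^ 2) := Real.sin_arccos _
    rw [this, Real.sq_sqrt (hc_pos j).le]
    have h := hc_lt1 j
    exact Real.sqrt_pos.mpr (by linarith)
  have hθmem : ∀ i, θ i ∈ Set.Ioc (0:ℝ) (Real.pi / 2) := by
    intro i
    constructor
    · apply Real.arccos_pos.mpr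
      rw [← Real.sqrt_one]
      exact Real.sqrt_lt_sqrt (hc_pos i).le (hc_lt1 i)
    · exact Real.arccos_le_pi_div_two.mpr (Real.sqrt_nonneg _)
  -- the matrix coefficients
  set b : ℕ → ℝ := fun j => (Real.cos (θ j)^2 + a)/(a+1) with hbdef
  set g : ℕ → ℝ := fun j => Real.sin (θ j) * Real.cos (θ j)/(a+1) with hgdef
  have hb_lt1 : ∀ j, b j < 1 := by
    intro j
    rw [hbdef]
    simp only
    rw [div_lt_one ha1]
    have := hcos_sq j; have := hc_lt1 j
    linarith
  have hb_pos : ∀ j, 0 < b j := by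
    intro j
    rw [hbdef]
    simp only
    apply div_pos _ ha1
    have h1 := hcos_sq j; have h2 := hc_pos j
    nlinarith
  have hcb : ∀ j, c j ≤ b j := by
    intro j
    rw [hbdef]
    simp only
    rw [le_div_iff₀ ha1, hcos_sq j]
    have h1 := hc_lt1 j
    nlinarith
  have hgb : ∀ j, g j ^ 2 + b j ^ 2 ≤ 1 := by
    intro j
    rw [hbdef, hgdef]
    simp only
    have hsc := Real.sin_sq_add_cos_sq (θ j)
    have hc1 : Real.cos (θ j) ^ 2 ≤ 1 := by rw [hcos_sq j]; exact (hc_lt1 j).le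
    have key : (Real.sin (θ j) * Real.cos (θ j))^2 + (Real.cos (θ j)^2 + a)^2 ≤ (a+1)^2 := by
      nlinarith [sq_nonneg (Real.cos (θ j)), sq_nonneg (Real.sin (θ j))]
    rw [div_pow, div_pow, ← add_div, div_le_one (by positivity)]
    exact key
  -- the operator
  set M : ℕ → AuxE2 →L[ℝ] AuxE2 := fun i => (auxBMap (g i) (b i)).toContinuousLinearMap
    with hMdef
  have hMcoe : ∀ i (v : AuxE2), M i v = auxBMap (g i) (b i) v := fun i v => rfl
  have hMv : ∀ i (v : AuxE2), ‖M i v‖ ≤ ‖v‖ := by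
    intro i v
    rw [hMcoe]
    exact le_trans (auxBMap_norm_le (hgb i) v) (aux_coord_le_norm v 1)
  set T : SlowH →L[ℝ] SlowH := auxDiagOp M hMv with hTdef
  have happ : ∀ (z : SlowH) (i : ℕ), (T z) i = M i (z i) := fun z i => rfl
  have hM0 : ∀ i (v : AuxE2), M i v 0 = -(g i) * v 1 := fun i v => rfl
  have hM1 : ∀ i (v : AuxE2), M i v 1 = b i * v 1 := fun i v => rfl
  have hblock : ∀ z : SlowH, ∀ i : ℕ,
      (T z) i 0 = -(Real.sin (θ i) * Real.cos (θ i) / (a + 1)) * (z i 1) ∧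
      (T z) i 1 = ((Real.cos (θ i) ^ 2 + a) / (a + 1)) * (z i 1) := by
    intro z i
    exact ⟨hM0 i (z i), hM1 i (z i)⟩
  -- zero vector coordinates
  have hzerocoord : ∀ (i : ℕ) (t : Fin 2), ((0 : SlowH) : ∀ _ : ℕ, AuxE2) i t = 0 := by
    intro i t
    rfl
  -- the initial point
  set α : ℕ → ℝ := fun j => 1/((j:ℝ)+1) with hαdef
  have hα_pos : ∀ j, 0 < α j := by intro j; rw [hαdef]; positivity
  set z0f : ∀ _ : ℕ, AuxE2 := fun j => WithLp.toLp 2 (fun t : Fin 2 => if t = 0 then 0 else α j) with hz0fdef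
  have hz0f_norm : ∀ j, ‖z0f j‖ = α j := by
    intro j
    rw [EuclideanSpace.norm_eq, Fin.sum_univ_two]
    have h1 : z0f j 0 = 0 := rfl
    have h2 : z0f j 1 = α j := rfl
    rw [h1, h2]
    simp [Real.norm_eq_abs, sq_abs]
    rw [Real.sqrt_sq (hα_pos j).le]
  have hαsq : Summable (fun j => α j ^ 2) := by
    have h1 : Summable (fun n : ℕ => 1 / (n:ℝ) ^ 2) :=
      Real.summable_one_div_nat_pow.mpr (by norm_num)
    have h2 := (summable_nat_add_iff 1).mpr h1
    apply h2.congr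
    intro j
    rw [hαdef]
    push_cast
    rw [div_pow, one_pow]
  have hz0mem : Memℓp z0f 2 := by
    apply memℓp_gen
    apply (Summable.congr hαsq)
    intro j
    rw [aux_rpow_toReal_two, hz0f_norm j]
  set z0 : SlowH := ⟨z0f, hz0mem⟩ with hz0def
  have hz0coord : ∀ j, (z0 : ∀ _ : ℕ, AuxE2) j 1 = α j := fun j => rfl
  -- coordinate-1 formula for the iterates
  have hIt1 : ∀ (k : ℕ) (j : ℕ), ((⇑T)^[k] z0) j 1 = b j ^ k * α j := by
    intro k
    induction k with
    | zero =>
      intro j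
      simp only [Function.iterate_zero, id_eq, pow_zero, one_mul]
      exact hz0coord j
    | succ n ih =>
      intro j
      rw [Function.iterate_succ_apply']
      rw [(hblock ((⇑T)^[n] z0) j).2, ih j]
      simp only [hbdef]
      ring
  -- norm bound for the iterates
  have hItn : ∀ (k : ℕ) (j : ℕ), ‖((⇑T)^[k+1] z0) j‖ ≤ b j ^ k * α j := by
    intro k j
    rw [Function.iterate_succ_apply']
    have h1 : (T ((⇑T)^[k] z0)) j = M j (((⇑T)^[k] z0) j) := rfl
    rw [h1, hMcoe]
    refine le_trans (auxBMap_norm_le (hgb j) _) ?_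
    rw [hIt1 k j, abs_of_nonneg (by positivity)]
  have hItn0 : ∀ (k : ℕ) (j : ℕ), ‖((⇑T)^[k] z0) j‖ ≤ α j := by
    intro k j
    cases k with
    | zero =>
      simp only [Function.iterate_zero, id_eq]
      exact le_of_eq (hz0f_norm j)
    | succ n =>
      refine le_trans (hItn n j) ?_
      have hb1 : b j ^ n ≤ 1 := pow_le_one₀ (hb_pos j).le (hb_lt1 j).le
      nlinarith [hα_pos j]
  -- strong convergence to 0
  have hsum_eq : ∀ k, ‖(⇑T)^[k] z0‖ = Real.sqrt (∑' j, ‖((⇑T)^[k] z0) j‖^2) := by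
    intro k
    rw [lp.norm_eq_tsum_rpow aux_toReal_two_pos, Real.sqrt_eq_rpow, aux_toReal_two]
    congr 1
    apply tsum_congr
    intro j
    rw [Real.rpow_two]
  have htsum0 : Tendsto (fun k => ∑' j, ‖((⇑T)^[k] z0) j‖^2) atTop (nhds 0) := by
    have h := tendsto_tsum_of_dominated_convergence (𝓕 := atTop) (f := fun k j => ‖((⇑T)^[k] z0) j‖^2)
      (g := fun _ => (0:ℝ)) (bound := fun j => α j ^ 2) hαsq ?_ ?_
    · simpa using h
    · intro j
      have hbp : Tendsto (fun k : ℕ => b j ^ k) atTop (nhds 0) :=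
        tendsto_pow_atTop_nhds_zero_of_lt_one (hb_pos j).le (hb_lt1 j)
      have hbp' : Tendsto (fun k : ℕ => b j ^ (k-1)) atTop (nhds 0) :=
        hbp.comp (tendsto_sub_atTop_nat 1)
      have hg : Tendsto (fun k : ℕ => (b j ^ (k-1) * α j)^2) atTop (nhds 0) := by
        have := (hbp'.mul_const (α j)).pow 2
        simpa using this
      apply squeeze_zero' (Eventually.of_forall (fun k => by positivity)) ?_ hg
      filter_upwards [eventually_ge_atTop 1] with k hk
      obtain ⟨k', rfl⟩ : ∃ k', k = k' + 1 := ⟨k - 1, by omega⟩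
      have h1 := hItn k' j
      have h2 : (0:ℝ) ≤ b j ^ k' * α j := by positivity
      simp only [Nat.add_sub_cancel]
      nlinarith [norm_nonneg (((⇑T)^[k'+1] z0) j)]
    · apply Eventually.of_forall
      intro k j
      have h1 := hItn0 k j
      have h2 := norm_nonneg (((⇑T)^[k] z0) j)
      rw [Real.norm_eq_abs, abs_of_nonneg (by positivity)]
      exact pow_le_pow_left₀ h2 h1 2
  have hconv : Tendsto (fun k : ℕ => (⇑T)^[k] z0) atTop (nhds (0 : SlowH)) := by
    rw [tendsto_zero_iff_norm_tendsto_zero]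
    have h := (Real.continuous_sqrt.tendsto 0).comp htsum0
    rw [Real.sqrt_zero] at h
    apply h.congr
    intro k
    exact (hsum_eq k).symm
  -- assemble
  refine ⟨θ, hθmem, T, hblock, ?_, ⟨map_zero T, ?_⟩, z0, hconv, ?_⟩
  · -- U ∩ V = {0}
    intro z hU hV
    apply lp.ext
    funext i
    obtain ⟨r, hr0, hr1⟩ := hU i
    have hz1 := hV i
    have hr : r = 0 := by
      rw [hz1] at hr1
      rcases mul_eq_zero.mp hr1.symm with h | h
      · exact h
      · exact absurd h (ne_of_gt (hsin_pos i))
    show (z : ∀ _ : ℕ, AuxE2) i = ((0 : SlowH) : ∀ _ : ℕ, AuxE2) i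
    have hz0i : ((0 : SlowH) : ∀ _ : ℕ, AuxE2) i = (0 : AuxE2) := rfl
    rw [hz0i]
    apply auxE2_eq_zero
    · rw [hr0, hr, zero_mul]
    · exact hz1
  · -- unique fixed point
    intro z hz
    apply lp.ext
    funext i
    have hco : ∀ t : Fin 2, (T z) i t = z i t := by
      intro t
      rw [hz]
    have hbeq : (Real.cos (θ i)^2 + a)/(a+1) = b i := by simp only [hbdef]
    have h1 : b i * (z i 1) = z i 1 := by
      rw [← hbeq, ← (hblock z i).2]
      exact hco 1
    have hz1 : z i 1 = 0 := by
      have h2 : (1 - b i) * (z i 1) = 0 := by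
        rw [sub_mul, one_mul, h1, sub_self]
      rcases mul_eq_zero.mp h2 with h | h
      · exact absurd h (by have := hb_lt1 i; intro hc; linarith)
      · exact h
    have hz0' : z i 0 = 0 := by
      rw [← (hco 0), (hblock z i).1, hz1, mul_zero]
    show (z : ∀ _ : ℕ, AuxE2) i = ((0 : SlowH) : ∀ _ : ℕ, AuxE2) i
    have hz0i : ((0 : SlowH) : ∀ _ : ℕ, AuxE2) i = (0 : AuxE2) := rfl
    rw [hz0i]
    exact auxE2_eq_zero _ hz0' hz1
  · -- lower bound
    intro k hk
    have hP0 : m 0 < k := by rw [hm0]; omega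
    have hexists : ∃ j : ℕ, m j < k ∧ k ≤ m (j+1) := by
      have hspec : m (Nat.findGreatest (fun i => m i < k) k) < k :=
        Nat.findGreatest_spec (P := fun i => m i < k) (Nat.zero_le k) hP0
      refine ⟨Nat.findGreatest (fun i => m i < k) k, hspec, ?_⟩
      by_contra h
      push_neg at h
      have hjlt : Nat.findGreatest (fun i => m i < k) k < k :=
        lt_of_le_of_lt (hm_ge _) hspec
      have h1 := Nat.le_findGreatest (P := fun i => m i < k)
        (show Nat.findGreatest (fun i => m i < k) k + 1 ≤ k by omega) h
      omega
    obtain ⟨j, hj0, hnext⟩ := hexists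
    -- the chain of inequalities
    have hmr : (0:ℝ) < (m (j+1) : ℝ) := by exact_mod_cast hm_pos j
    have hexp : Real.exp (-1) ≤ b j ^ k := by
      have h1 : c j ^ k = Real.exp (-(k / (m (j+1) : ℝ))) := by
        rw [hcdef]
        simp only
        rw [← Real.exp_nat_mul]
        congr 1
        field_simp
      have h2 : Real.exp (-1) ≤ Real.exp (-(k / (m (j+1) : ℝ))) := by
        apply Real.exp_le_exp.mpr
        have : (k:ℝ) / (m (j+1) : ℝ) ≤ 1 := by
          rw [div_le_one hmr]
          exact_mod_cast hnext
        linarith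
      calc Real.exp (-1) ≤ c j ^ k := by rw [h1]; exact h2
      _ ≤ b j ^ k := pow_le_pow_left₀ (hc_pos j).le (hcb j) k
    have hFα : F k ≤ α j := by
      rcases Nat.eq_zero_or_pos j with hj | hj
      · have := (hF01 k (by positivity)).2
        rw [hj, hαdef]
        simp only [Nat.cast_zero, zero_add, div_one]
        linarith
      · have hxj := hxspec j hj
        have hmem1 : x j ∈ Set.Ici (0:ℝ) := hxj.1
        have hmem2 : (k:ℝ) ∈ Set.Ici (0:ℝ) := by simp
        have hlt : x j < (k:ℝ) := by
          have h1 : x j ≤ (m j : ℝ) := hm_x j hj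
          have h2 : (m j : ℝ) < (k : ℝ) := by exact_mod_cast hj0
          linarith
        have h3 : F (k:ℝ) < F (x j) := hFanti hmem1 hmem2 hlt
        rw [hxj.2] at h3
        rw [hαdef]
        simp only
        push_cast at h3 ⊢
        linarith
    have hchain : Real.exp (-1) * F k ≤ b j ^ k * α j := by
      apply mul_le_mul hexp hFα (hF01 k (by positivity)).1.le (by positivity)
    refine le_trans hchain ?_
    have h4 : b j ^ k * α j = |((⇑T)^[k] z0) j 1| := by
      rw [hIt1 k j, abs_of_nonneg (by positivity)]
    rw [h4]
    refine le_trans (aux_coord_le_norm _ 1) ?_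
    exact lp.norm_apply_le_norm (by norm_num) ((⇑T)^[k] z0) j
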